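/- Let n ≥ 2, let N be a large integer, and let E₁,…,Eₙ ⊂ ℝ have finite measure with |Eₙ| = 1. Let C₀ > 0 and set E′ₙ = {x ∈ Eₙ : Mχ_{Eᵢ}(x) < C₀|Eᵢ| for all 1 ≤ i ≤ n}, E′ᵢ = Eᵢ for 1 ≤ i ≤ n−1, and assume |E′ₙ| ≥ 1/2 (which holds for C₀ sufficiently large, by the Hardy–Littlewood maximal inequality). For each bounded interval I and 1 ≤ i ≤ n, set λᵢ(I) = (1/(|I||E′ᵢ|)) ∫_{E′ᵢ} χ̃_I^N. Then for every bounded interval I, λₙ(I) ≤ C·(1 + λ₁(I) + ⋯ + λ_{n−1}(I))^{1−N}, where C depends only on n, N and C₀. -/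

import Mathlib

open MeasureTheory Real Complex
open scoped FourierTransform ENNReal NNReal Classical
noncomputable section

structure Iv where
  l : ℝ
  len : ℝ

def Iv.set (I : Iv) : Set ℝ := Set.Ioo I.l (I.l + I.len)

def Iv.dil (c : ℝ) (I : Iv) : Set ℝ :=
  Set.Ioo (I.l + I.len / 2 - c * I.len / 2) (I.l + I.len / 2 + c * I.len / 2)

def Iv.chi (I : Iv) (x : ℝ) : ℝ := (1 + Metric.infDist x I.set / I.len)⁻¹

structure Tile where
  j : ℤ
  kt : ℤ
  kf : ℤ

def Tile.timeIv (P : Tile) : Iv := ⟨(2:ℝ)^P.j * P.kt, (2:ℝ)^P.j⟩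

def Tile.freqIv (β : ℝ) (P : Tile) : Iv :=
  ⟨(2:ℝ)^(-P.j) * ((P.kf : ℝ) + (-1:ℝ)^(-P.j) * β), (2:ℝ)^(-P.j)⟩

def Tile.lt' (β : ℝ) (P' P : Tile) : Prop :=
  (P'.timeIv).set ⊂ (P.timeIv).set ∧ (P.freqIv β).set ⊆ (P'.freqIv β).dil 3

def Tile.le' (β : ℝ) (P' P : Tile) : Prop := Tile.lt' β P' P ∨ P' = P

def Tile.lesim (β c : ℝ) (P' P : Tile) : Prop :=
  (P'.timeIv).set ⊆ (P.timeIv).set ∧ (P.freqIv β).set ⊆ (P'.freqIv β).dil c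

def Tile.lesim' (β c : ℝ) (P' P : Tile) : Prop :=
  Tile.lesim β c P' P ∧ ¬ Tile.le' β P' P

structure MultiTile (n : ℕ) where
  j : ℤ
  kt : ℤ
  kf : Fin n → ℤ

def MultiTile.tile {n : ℕ} (P : MultiTile n) (i : Fin n) : Tile := ⟨P.j, P.kt, P.kf i⟩

def MultiTile.timeIv {n : ℕ} (P : MultiTile n) : Iv := ⟨(2:ℝ)^P.j * P.kt, (2:ℝ)^P.j⟩

def MultiTile.freqCube {n : ℕ} (α : Fin n → ℝ) (P : MultiTile n) : Set (Fin n → ℝ) :=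
  {ξ | ∀ i, ξ i ∈ ((P.tile i).freqIv (α i)).set}

def HasRank (n k : ℕ) (α : Fin n → ℝ) (c₃ csmall : ℝ) (Ps : Finset (MultiTile n)) : Prop :=
  ∀ P ∈ Ps, ∀ P' ∈ Ps, ∀ ι : Fin k → Fin n, StrictMono ι →
    (∀ s, Tile.le' (α (ι s)) (MultiTile.tile P' (ι s)) (MultiTile.tile P (ι s))) →
    (∀ i, Tile.lesim (α i) c₃ (MultiTile.tile P' i) (MultiTile.tile P i)) ∧
    ((2:ℝ)^P'.j ≤ csmall * (2:ℝ)^P.j →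
      ∃ i i' : Fin n, i ≠ i' ∧ Tile.lesim' (α i) c₃ (MultiTile.tile P' i) (MultiTile.tile P i) ∧
        Tile.lesim' (α i') c₃ (MultiTile.tile P' i') (MultiTile.tile P i'))

def AdaptedBump (w : Iv) (Ca : ℕ → ℝ) (M : ℕ) (ψ : ℝ → ℂ) : Prop :=
  ContDiff ℝ (⊤ : ℕ∞) ψ ∧ (∀ ξ, ξ ∉ w.set → ψ ξ = 0) ∧ (∀ ξ ∈ w.dil (9/10), ψ ξ = 1) ∧
  ∀ a : ℕ, a ≤ M → ∀ ξ : ℝ, ‖iteratedDeriv a ψ ξ‖ ≤ Ca a / w.len ^ a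

def mulOp (ψ : ℝ → ℂ) (f : ℝ → ℂ) (x : ℝ) : ℂ :=
  ∫ ξ : ℝ, ψ ξ * 𝓕 f ξ * Complex.exp (2 * Real.pi * Complex.I * ξ * x)

def tileNorm (N : ℕ) (ψ : ℝ → ℂ) (P : Tile) (f : ℝ → ℂ) : ℝ :=
  ((2:ℝ)^P.j)⁻¹ * ∫ x : ℝ, ‖mulOp ψ f x‖ * (P.timeIv).chi x ^ (2*N)

def IsTree (n : ℕ) (α : Fin n → ℝ) (Ps T : Finset (MultiTile n)) (PT : MultiTile n)
    (jdx : Fin n) : Prop :=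
  PT ∈ Ps ∧ T ⊆ Ps ∧ ∀ P ∈ T, Tile.le' (α jdx) (MultiTile.tile P jdx) (MultiTile.tile PT jdx)

def treeNorm (n N : ℕ) (ψ : Fin n → Tile → ℝ → ℂ) (i : Fin n) (f : ℝ → ℂ)
    (T : Finset (MultiTile n)) : ℝ :=
  ⨆ P ∈ T, tileNorm N (ψ i (MultiTile.tile P i)) (MultiTile.tile P i) f

def treeSize (n N : ℕ) (α : Fin n → ℝ) (c₃ : ℝ) (ψ : Fin n → Tile → ℝ → ℂ)
    (i : Fin n) (f : ℝ → ℂ) (T : Finset (MultiTile n)) (PT : MultiTile n) : ℝ :=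
  Real.sqrt (((2:ℝ)^PT.j)⁻¹ * ∑ P ∈ T,
      if Tile.lesim' (α i) c₃ (MultiTile.tile P i) (MultiTile.tile PT i)
      then (2:ℝ)^P.j * tileNorm N (ψ i (MultiTile.tile P i)) (MultiTile.tile P i) f ^ 2 else 0)
    + treeNorm n N ψ i f T

def StronglyDisjoint (n : ℕ) (α : Fin n → ℝ) (i : Fin n)
    (T : Finset (MultiTile n)) (PT : MultiTile n)
    (T' : Finset (MultiTile n)) (PT' : MultiTile n) : Prop :=
  (∀ P ∈ T, ∀ P' ∈ T', MultiTile.tile P i ≠ MultiTile.tile P' i) ∧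
  (∀ P ∈ T, ∀ P' ∈ T',
    ((MultiTile.tile P i).freqIv (α i)).set ⊂ ((MultiTile.tile P' i).freqIv (α i)).set →
    (MultiTile.timeIv P').set ∩ (MultiTile.timeIv PT).set = ∅) ∧
  (∀ P ∈ T, ∀ P' ∈ T',
    ((MultiTile.tile P' i).freqIv (α i)).set ⊂ ((MultiTile.tile P i).freqIv (α i)).set →
    (MultiTile.timeIv P).set ∩ (MultiTile.timeIv PT').set = ∅)

def setDist {E : Type*} [PseudoMetricSpace E] (s t : Set E) : ℝ :=
  ⨅ x ∈ s, Metric.infDist x t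

/-- The (centered) Hardy–Littlewood maximal function of the indicator of `E`. -/
def maximalFn (E : Set ℝ) (x : ℝ) : ℝ≥0∞ :=
  ⨆ (r : ℝ) (_ : 0 < r), volume (E ∩ Set.Ioo (x - r) (x + r)) / ENNReal.ofReal (2 * r)

/-- The normalized average `λ(I) = (|I| |E'|)⁻¹ ∫_{E'} χ̃_I^N`. -/
def lamAvg (N : ℕ) (E' : Set ℝ) (I : Iv) : ℝ :=
  (∫ x in E', I.chi x ^ N) / (I.len * (volume E').toReal)


section Aux9
open Filter

lemma aux_le_infDist {b : ℝ} {x : ℝ} {s : Set ℝ} (hs : s.Nonempty) (h : ∀ y ∈ s, b ≤ dist x y) :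
    b ≤ Metric.infDist x s := by
  by_contra hlt
  rcases (Metric.infDist_lt_iff hs).1 (not_le.1 hlt) with ⟨y, hy, hd⟩
  exact absurd (h y hy) (not_le.2 hd)

lemma infDist_Ioo_eq {a L x : ℝ} (hL : 0 < L) :
    Metric.infDist x (Set.Ioo a (a + L)) =
      if x ≤ a then a - x else if a + L ≤ x then x - (a + L) else 0 := by
  have hne : a ≠ a + L := by linarith
  have key : Metric.infDist x (Set.Ioo a (a+L)) = Metric.infDist x (Set.Icc a (a+L)) := by
    rw [← Metric.infDist_closure, closure_Ioo hne]
  have hIccne : (Set.Icc a (a+L)).Nonempty := ⟨a, le_refl a, by linarith⟩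
  rw [key]
  split_ifs with h1 h2
  · apply le_antisymm
    · have h' : Metric.infDist x (Set.Icc a (a+L)) ≤ dist x a := Metric.infDist_le_dist_of_mem ⟨le_refl a, by linarith⟩
      rw [Real.dist_eq, _root_.abs_of_nonpos (by linarith)] at h'
      linarith
    · apply aux_le_infDist hIccne
      intro y hy
      rw [Real.dist_eq, _root_.abs_of_nonpos (by linarith [hy.1])]
      linarith [hy.1]
  · apply le_antisymm
    · have h' : Metric.infDist x (Set.Icc a (a+L)) ≤ dist x (a+L) := Metric.infDist_le_dist_of_mem ⟨by linarith, le_refl _⟩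
      rw [Real.dist_eq, _root_.abs_of_nonneg (by linarith)] at h'
      linarith
    · apply aux_le_infDist hIccne
      intro y hy
      rw [Real.dist_eq, _root_.abs_of_nonneg (by linarith [hy.2])]
      linarith [hy.2]
  · exact Metric.infDist_zero_of_mem ⟨by push_neg at h1; linarith, by push_neg at h2; linarith⟩

lemma ray_int {L : ℝ} (hL : 0 < L) {N : ℕ} (hN : 2 ≤ N) (b s : ℝ) (hs : 0 ≤ s) :
    IntegrableOn (fun x => ((1 + (x - b)/L)^N)⁻¹) (Set.Ioi (b+s)) volume ∧
    ∫ x in Set.Ioi (b+s), ((1 + (x - b)/L)^N)⁻¹ ≤ L * (1+s/L) ^ (1-(N:ℝ)) := by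
  have hN1 : (1:ℝ) ≤ (N:ℝ) - 1 := by
    have : (2:ℝ) ≤ (N:ℝ) := by exact_mod_cast hN
    linarith
  set g : ℝ → ℝ := fun x => -(L/((N:ℝ)-1)) * (1 + (x-b)/L) ^ (1-(N:ℝ)) with hg
  set f' : ℝ → ℝ := fun x => ((1 + (x - b)/L)^N)⁻¹ with hf'
  have hupos : ∀ x ∈ Set.Ici (b+s), 0 < 1 + (x-b)/L := by
    intro x hx
    have : 0 ≤ (x - b)/L := div_nonneg (by simp at hx; linarith) hL.le
    linarith
  have hderiv : ∀ x ∈ Set.Ici (b+s), HasDerivAt g (f' x) x := by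
    intro x hx
    have hu : HasDerivAt (fun x : ℝ => 1 + (x-b)/L) (1/L) x := by
      simpa using (((hasDerivAt_id x).sub_const b).div_const L).const_add 1
    have hpos := hupos x hx
    have hr := (Real.hasDerivAt_rpow_const (p := 1-(N:ℝ)) (Or.inl hpos.ne')).comp x hu
    have := hr.const_mul (-(L/((N:ℝ)-1)))
    refine this.congr_deriv ?_
    have e1 : (1 + (x-b)/L) ^ (1-(N:ℝ)-1) = (1 + (x-b)/L) ^ (-(N:ℝ)) := by norm_num
    have e2 : (1 + (x-b)/L) ^ (-(N:ℝ)) = ((1 + (x-b)/L)^N)⁻¹ := by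
      rw [Real.rpow_neg hpos.le, Real.rpow_natCast]
    rw [hf']
    simp only [Function.comp]
    rw [e1, e2]
    generalize ((1 + (x - b) / L) ^ N)⁻¹ = u
    have hNe : (N:ℝ) - 1 ≠ 0 := by linarith
    field_simp
    ring
  have g'pos : ∀ x ∈ Set.Ioi (b+s), 0 ≤ f' x := by
    intro x hx
    have := hupos x (Set.mem_Ici.2 (le_of_lt hx))
    positivity
  have htend : Tendsto g atTop (nhds 0) := by
    have h1 : Tendsto (fun x : ℝ => 1 + (x-b)/L) atTop atTop := by
      apply tendsto_atTop_add_const_left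
      exact (tendsto_id.atTop_add tendsto_const_nhds).atTop_div_const hL
    have h2 : Tendsto (fun y : ℝ => y ^ (1-(N:ℝ))) atTop (nhds 0) := by
      have : (1:ℝ)-(N:ℝ) = -((N:ℝ)-1) := by ring
      rw [this]
      exact tendsto_rpow_neg_atTop (by linarith)
    have h3 := (h2.comp h1).const_mul (-(L/((N:ℝ)-1)))
    rw [mul_zero] at h3
    exact h3
  have hint := integrableOn_Ioi_deriv_of_nonneg' hderiv g'pos htend
  refine ⟨hint, ?_⟩
  have hval := integral_Ioi_of_hasDerivAt_of_nonneg' hderiv g'pos htend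
  rw [hval]
  have : (0:ℝ) - g (b+s) = (L/((N:ℝ)-1)) * (1 + s/L) ^ (1-(N:ℝ)) := by
    rw [hg]; simp only []
    have : b + s - b = s := by ring
    rw [this]; ring
  rw [this]
  apply mul_le_mul_of_nonneg_right
  · rw [div_le_iff₀ (by linarith)]
    nlinarith
  · positivity

lemma ray_int_left {L : ℝ} (hL : 0 < L) {N : ℕ} (hN : 2 ≤ N) (a s : ℝ) (hs : 0 ≤ s) :
    IntegrableOn (fun x => ((1 + (a - x)/L)^N)⁻¹) (Set.Iic (a-s)) volume ∧
    ∫ x in Set.Iic (a-s), ((1 + (a - x)/L)^N)⁻¹ ≤ L * (1+s/L) ^ (1-(N:ℝ)) := by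
  set f : ℝ → ℝ := fun y => ((1 + (y - (-a))/L)^N)⁻¹ with hf
  obtain ⟨hint, hbound⟩ := ray_int hL hN (-a) s hs
  have hfx : ∀ x, f (-x) = ((1 + (a - x)/L)^N)⁻¹ := by
    intro x; rw [hf]; ring_nf
  have heqset : -a + s = -(a - s) := by ring
  have hintIci : IntegrableOn f (Set.Ici (-(a-s))) volume := by
    rw [integrableOn_Ici_iff_integrableOn_Ioi]
    rw [← heqset] at *; exact hint
  have hpre : Neg.neg ⁻¹' Set.Iic (a-s) = Set.Ici (-(a-s)) := by
    ext x
    simp only [Set.mem_preimage, Set.mem_Iic, Set.mem_Ici]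
    constructor <;> intro h <;> linarith
  have hmap : volume.restrict (Set.Iic (a-s)) =
      (volume.restrict (Set.Ici (-(a-s)))).map Neg.neg := by
    have h1 := measurableEmbedding_neg.restrict_map (μ := (volume : Measure ℝ)) (Set.Iic (a-s))
    rw [Measure.map_neg_eq_self, hpre] at h1
    exact h1
  constructor
  · have : IntegrableOn (fun x => f (-x)) (Set.Iic (a-s)) volume := by
      rw [IntegrableOn, hmap, measurableEmbedding_neg.integrable_map_iff]
      apply hintIci.congr_fun ?_ measurableSet_Ici
      intro x _
      simp [Function.comp]
    exact this.congr_fun (fun x _ => hfx x) measurableSet_Iic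
  · calc ∫ x in Set.Iic (a-s), ((1 + (a - x)/L)^N)⁻¹
        = ∫ x in Set.Iic (a-s), f (-x) := by
          refine setIntegral_congr_fun measurableSet_Iic fun x _ => (hfx x).symm
      _ = ∫ x in Set.Ioi (-(a-s)), f x := integral_comp_neg_Iic _ _
      _ ≤ L * (1+s/L) ^ (1-(N:ℝ)) := by rw [← heqset]; exact hbound

lemma chi_nonneg {I : Iv} (hL : 0 < I.len) (x : ℝ) : 0 ≤ I.chi x := by
  unfold Iv.chi
  have : 0 ≤ Metric.infDist x I.set / I.len := div_nonneg Metric.infDist_nonneg hL.le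
  positivity

lemma chi_le_one {I : Iv} (hL : 0 < I.len) (x : ℝ) : I.chi x ≤ 1 := by
  unfold Iv.chi
  have h : 0 ≤ Metric.infDist x I.set / I.len := div_nonneg Metric.infDist_nonneg hL.le
  rw [inv_le_one_iff₀]
  right; linarith

lemma chi_pow_left {I : Iv} (hL : 0 < I.len) {N : ℕ} {x : ℝ} (hx : x ≤ I.l) :
    I.chi x ^ N = ((1 + (I.l - x)/I.len)^N)⁻¹ := by
  unfold Iv.chi Iv.set
  rw [infDist_Ioo_eq hL, if_pos hx, inv_pow]

lemma chi_pow_right {I : Iv} (hL : 0 < I.len) {N : ℕ} {x : ℝ} (hx : I.l + I.len ≤ x) :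
    I.chi x ^ N = ((1 + (x - (I.l + I.len))/I.len)^N)⁻¹ := by
  unfold Iv.chi Iv.set
  rw [infDist_Ioo_eq hL, if_neg (by linarith), if_pos hx, inv_pow]

lemma chi_pow_le_one {I : Iv} (hL : 0 < I.len) {N : ℕ} (x : ℝ) : I.chi x ^ N ≤ 1 :=
  pow_le_one₀ (chi_nonneg hL x) (chi_le_one hL x)

lemma chi_meas {I : Iv} {N : ℕ} : Measurable (fun x => I.chi x ^ N) := by
  apply Measurable.pow_const
  unfold Iv.chi
  apply Measurable.inv
  apply Measurable.add measurable_const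
  exact (Metric.continuous_infDist_pt I.set).measurable.div_const _

lemma mid_int {I : Iv} (hL : 0 < I.len) {N : ℕ} :
    IntegrableOn (fun x => I.chi x ^ N) (Set.Ioc I.l (I.l + I.len)) volume := by
  apply Integrable.mono' (g := fun _ => (1:ℝ))
  · exact integrableOn_const (by simp [Real.volume_Ioc])
  · exact (chi_meas (I := I) (N := N)).aestronglyMeasurable
  · exact Eventually.of_forall fun x => by
      rw [Real.norm_eq_abs, _root_.abs_of_nonneg (pow_nonneg (chi_nonneg hL x) N)]
      exact chi_pow_le_one hL x

lemma numerator_bound {I : Iv} (hL : 0 < I.len) {N : ℕ} (hN : 2 ≤ N) (S : Set ℝ) (d : ℝ)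
    (hd : 0 ≤ d) (hdist : ∀ x ∈ S, d ≤ Metric.infDist x I.set) :
    ∫ x in S, I.chi x ^ N ≤ 3 * I.len * (1 + d/I.len) ^ (1-(N:ℝ)) := by
  obtain ⟨hIl, hIl_le⟩ := ray_int_left hL hN I.l d hd
  have hIl' : IntegrableOn (fun x => I.chi x ^ N) (Set.Iic (I.l-d)) volume :=
    hIl.congr_fun (fun x hx => (chi_pow_left hL (show x ≤ I.l by simp at hx; linarith)).symm) measurableSet_Iic
  have hIlval : ∫ x in Set.Iic (I.l-d), I.chi x ^ N ≤ I.len * (1+d/I.len) ^ (1-(N:ℝ)) := by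
    rw [setIntegral_congr_fun measurableSet_Iic
      (fun x hx => chi_pow_left hL (show x ≤ I.l by simp at hx; linarith))]
    exact hIl_le
  obtain ⟨hIr, hIr_le⟩ := ray_int hL hN (I.l+I.len) d hd
  have hIr' : IntegrableOn (fun x => I.chi x ^ N) (Set.Ioi (I.l+I.len+d)) volume :=
    hIr.congr_fun (fun x hx => (chi_pow_right hL (show I.l + I.len ≤ x by simp at hx; linarith)).symm) measurableSet_Ioi
  have hIrval : ∫ x in Set.Ioi (I.l+I.len+d), I.chi x ^ N
      ≤ I.len * (1+d/I.len) ^ (1-(N:ℝ)) := by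
    rw [setIntegral_congr_fun measurableSet_Ioi
      (fun x hx => chi_pow_right hL (show I.l + I.len ≤ x by simp at hx; linarith))]
    exact hIr_le
  have hpow_nonneg : (0:ℝ) ≤ (1 + d/I.len) ^ (1-(N:ℝ)) := by
    have : 0 ≤ d/I.len := div_nonneg hd hL.le
    positivity
  rcases eq_or_lt_of_le hd with hd0 | hdpos
  · -- d = 0
    obtain rfl : d = 0 := hd0.symm
    rw [sub_zero] at hIl' hIlval
    rw [add_zero] at hIr' hIrval
    have e0 : (1:ℝ) + 0/I.len = 1 := by simp
    rw [e0, Real.one_rpow, mul_one] at hIlval hIrval ⊢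
    have hmid := mid_int hL (N := N)
    have hmidval : ∫ x in Set.Ioc I.l (I.l+I.len), I.chi x ^ N ≤ I.len := by
      calc ∫ x in Set.Ioc I.l (I.l+I.len), I.chi x ^ N
          ≤ ∫ _x in Set.Ioc I.l (I.l+I.len), (1:ℝ) := by
            apply setIntegral_mono_on hmid
              (integrableOn_const (by simp [Real.volume_Ioc]))
              measurableSet_Ioc
            exact fun x _ => chi_pow_le_one hL x
        _ = I.len := by
            rw [setIntegral_const, measureReal_def, Real.volume_Ioc, smul_eq_mul, mul_one]
            rw [ENNReal.toReal_ofReal (by linarith)]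
            ring
    have hseteq : Set.Ioc I.l (I.l+I.len) ∪ Set.Ioi (I.l+I.len) = Set.Ioi I.l :=
      Set.Ioc_union_Ioi_eq_Ioi (by linarith)
    have hIoi : IntegrableOn (fun x => I.chi x ^ N) (Set.Ioi I.l) volume :=
      hseteq ▸ hmid.union hIr'
    have huniv : Integrable (fun x => I.chi x ^ N) volume := by
      rw [← integrableOn_univ, ← Set.Iic_union_Ioi (a := I.l)]
      exact hIl'.union hIoi
    have h1 : ∫ x in S, I.chi x ^ N ≤ ∫ x, I.chi x ^ N :=
      setIntegral_le_integral huniv (Eventually.of_forall fun x => pow_nonneg (chi_nonneg hL x) N)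
    have h2 : ∫ x, I.chi x ^ N =
        (∫ x in Set.Iic I.l, I.chi x ^ N) + ∫ x in Set.Ioi I.l, I.chi x ^ N := by
      rw [← setIntegral_union (Set.Iic_disjoint_Ioi le_rfl) measurableSet_Ioi hIl' hIoi,
        Set.Iic_union_Ioi, setIntegral_univ]
    have h3 : ∫ x in Set.Ioi I.l, I.chi x ^ N =
        (∫ x in Set.Ioc I.l (I.l+I.len), I.chi x ^ N) + ∫ x in Set.Ioi (I.l+I.len), I.chi x ^ N := by
      rw [← setIntegral_union (Set.Ioc_disjoint_Ioi le_rfl) measurableSet_Ioi hmid hIr', hseteq]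
    calc ∫ x in S, I.chi x ^ N ≤ _ := h1
      _ = _ := h2
      _ = (∫ x in Set.Iic I.l, I.chi x ^ N) + ((∫ x in Set.Ioc I.l (I.l+I.len), I.chi x ^ N)
            + ∫ x in Set.Ioi (I.l+I.len), I.chi x ^ N) := by rw [h3]
      _ ≤ I.len + (I.len + I.len) := by gcongr
      _ ≤ 3 * I.len := by linarith
  · -- d > 0
    have hIr'' : IntegrableOn (fun x => I.chi x ^ N) (Set.Ici (I.l+I.len+d)) volume :=
      Iff.mpr integrableOn_Ici_iff_integrableOn_Ioi hIr'
    have hsub : S ⊆ Set.Iic (I.l-d) ∪ Set.Ici (I.l+I.len+d) := by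
      intro x hx
      have h := hdist x hx
      unfold Iv.set at h
      rw [infDist_Ioo_eq hL] at h
      split_ifs at h with h1 h2
      · left; simp only [Set.mem_Iic]; linarith
      · right; simp only [Set.mem_Ici]; linarith
      · exfalso; linarith
    have hdisj : Disjoint (Set.Iic (I.l-d)) (Set.Ici (I.l+I.len+d)) :=
      Set.Iic_disjoint_Ici.mpr (by linarith)
    have hU : IntegrableOn (fun x => I.chi x ^ N)
        (Set.Iic (I.l-d) ∪ Set.Ici (I.l+I.len+d)) volume := hIl'.union hIr''
    calc ∫ x in S, I.chi x ^ N
        ≤ ∫ x in Set.Iic (I.l-d) ∪ Set.Ici (I.l+I.len+d), I.chi x ^ N := by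
          apply setIntegral_mono_set hU
            (Eventually.of_forall fun x => pow_nonneg (chi_nonneg hL x) N)
            (HasSubset.Subset.eventuallyLE hsub)
      _ = (∫ x in Set.Iic (I.l-d), I.chi x ^ N) + ∫ x in Set.Ici (I.l+I.len+d), I.chi x ^ N :=
          setIntegral_union hdisj measurableSet_Ici hIl' hIr''
      _ = (∫ x in Set.Iic (I.l-d), I.chi x ^ N) + ∫ x in Set.Ioi (I.l+I.len+d), I.chi x ^ N := by
          rw [integral_Ici_eq_integral_Ioi]
      _ ≤ I.len * (1+d/I.len) ^ (1-(N:ℝ)) + I.len * (1+d/I.len) ^ (1-(N:ℝ)) := by gcongr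
      _ ≤ 3 * I.len * (1 + d/I.len) ^ (1-(N:ℝ)) := by nlinarith [hL.le, hpow_nonneg]

lemma dist_le_infDist_add {I : Iv} (hL : 0 < I.len) (x y : ℝ) :
    |x - y| ≤ Metric.infDist x I.set + I.len + Metric.infDist y I.set := by
  unfold Iv.set
  rw [infDist_Ioo_eq hL, infDist_Ioo_eq hL]
  split_ifs <;> (rw [abs_le]; constructor <;> linarith)

lemma lam_i_bound {I : Iv} (hL : 0 < I.len) {N : ℕ} (hN : 2 ≤ N) (Ei : Set ℝ)
    (hEfin : volume Ei < ⊤) {C₀ : ℝ} (hC₀ : 0 < C₀)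
    (x₀ D : ℝ) (hD : 0 ≤ D) (hDdist : Metric.infDist x₀ I.set ≤ D)
    (hmax : ∀ r : ℝ, 0 < r → (volume (Ei ∩ Set.Ioo (x₀ - r) (x₀ + r))).toReal
        ≤ C₀ * (volume Ei).toReal * (2*r)) :
    ∫ x in Ei, I.chi x ^ N ≤ 2 * C₀ * (volume Ei).toReal * (D + 3*I.len) := by
  have hNpos : (0:ℝ) < N := by positivity
  have hN2 : (2:ℝ) ≤ (N:ℝ) := by exact_mod_cast hN
  set μi := (volume Ei).toReal with hμi
  have hμi0 : 0 ≤ μi := ENNReal.toReal_nonneg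
  set μ := volume.restrict Ei with hμ
  haveI : IsFiniteMeasure μ := ⟨by rw [hμ, Measure.restrict_apply_univ]; exact hEfin⟩
  have hint : Integrable (fun x => I.chi x ^ N) μ := by
    apply Integrable.mono' (g := fun _ => (1:ℝ)) (integrable_const 1)
      chi_meas.aestronglyMeasurable
    exact Eventually.of_forall fun x => by
      rw [Real.norm_eq_abs, _root_.abs_of_nonneg (pow_nonneg (chi_nonneg hL x) N)]
      exact chi_pow_le_one hL x
  have hnn : 0 ≤ᵐ[μ] fun x => I.chi x ^ N :=
    Eventually.of_forall fun x => pow_nonneg (chi_nonneg hL x) N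
  have hbdd : (fun x => I.chi x ^ N) ≤ᵐ[μ] fun _ => (1:ℝ) :=
    Eventually.of_forall fun x => chi_pow_le_one hL x
  have hlc := hint.integral_eq_integral_Ioc_meas_le hnn hbdd
  set h : ℝ → ℝ := fun t => (μ {a | t ≤ I.chi a ^ N}).toReal with hh
  set g : ℝ → ℝ := fun t => 2*C₀*μi * (I.len * t ^ (-(1/(N:ℝ))) + (D + I.len)) with hgdef
  have hanti : Antitone h := by
    intro t1 t2 h12
    apply ENNReal.toReal_mono (measure_ne_top μ _)
    exact measure_mono fun a ha => le_trans h12 ha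
  have hh_int : IntegrableOn h (Set.Ioc (0:ℝ) 1) volume := by
    apply Integrable.mono' (g := fun _ => μi)
      (integrableOn_const (by simp))
      (hanti.measurable.aestronglyMeasurable)
    apply Eventually.of_forall fun t => ?_
    rw [Real.norm_eq_abs, _root_.abs_of_nonneg ENNReal.toReal_nonneg]
    apply ENNReal.toReal_mono hEfin.ne
    calc μ {a | t ≤ I.chi a ^ N} ≤ μ Set.univ := measure_mono (Set.subset_univ _)
      _ = volume Ei := by rw [hμ, Measure.restrict_apply_univ]
  have hrpow_int : IntegrableOn (fun t : ℝ => t ^ (-(1/(N:ℝ)))) (Set.Ioc (0:ℝ) 1) volume := by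
    have := intervalIntegral.intervalIntegrable_rpow' (a := 0) (b := 1)
      (r := -(1/(N:ℝ))) (by rw [neg_lt, neg_neg]; rw [div_lt_iff₀ hNpos]; linarith)
    rwa [intervalIntegrable_iff_integrableOn_Ioc_of_le zero_le_one] at this
  have hg_int : IntegrableOn g (Set.Ioc (0:ℝ) 1) volume := by
    apply Integrable.const_mul
    exact ((hrpow_int.const_mul I.len).add (integrableOn_const (by simp)))
  have hpt : ∀ t ∈ Set.Ioc (0:ℝ) 1, h t ≤ g t := by
    intro t ht
    obtain ⟨ht0, ht1⟩ := ht
    set r : ℝ := I.len * t ^ (-(1/(N:ℝ))) + (D + I.len) with hrdef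
    have htr : (0:ℝ) < t ^ (-(1/(N:ℝ))) := Real.rpow_pos_of_pos ht0 _
    have hrpos : 0 < r := by have := mul_pos hL htr; rw [hrdef]; linarith
    have hsubset : {a | t ≤ I.chi a ^ N} ∩ Ei ⊆ Ei ∩ Set.Ioo (x₀ - r) (x₀ + r) := by
      rintro a ⟨hta, haE⟩
      refine ⟨haE, ?_⟩
      have hchi : t ^ ((1:ℝ)/(N:ℝ)) ≤ I.chi a := by
        rw [← pow_le_pow_iff_left₀ (Real.rpow_nonneg ht0.le _) (chi_nonneg hL a)
          (show N ≠ 0 by omega)]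
        calc (t ^ ((1:ℝ)/(N:ℝ))) ^ N = t ^ (((1:ℝ)/(N:ℝ)) * N) := by
              rw [← Real.rpow_natCast (t ^ ((1:ℝ)/(N:ℝ))) N, ← Real.rpow_mul ht0.le]
          _ = t := by rw [one_div_mul_cancel (by positivity), Real.rpow_one]
          _ ≤ I.chi a ^ N := hta
      have htp : (0:ℝ) < t ^ ((1:ℝ)/(N:ℝ)) := Real.rpow_pos_of_pos ht0 _
      have hw : 0 < 1 + Metric.infDist a I.set / I.len := by
        have := div_nonneg (Metric.infDist_nonneg (x := a) (s := I.set)) hL.le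
        linarith
      have hinv : 1 + Metric.infDist a I.set / I.len ≤ t ^ (-((1:ℝ)/(N:ℝ))) := by
        rw [Real.rpow_neg ht0.le]
        calc 1 + Metric.infDist a I.set / I.len
            = ((1 + Metric.infDist a I.set / I.len)⁻¹)⁻¹ := (inv_inv _).symm
          _ ≤ (t ^ ((1:ℝ)/(N:ℝ)))⁻¹ := by
              apply inv_anti₀ htp
              exact hchi
      have hdista : Metric.infDist a I.set ≤ I.len * (t ^ (-((1:ℝ)/(N:ℝ))) - 1) := by
        have h2 : Metric.infDist a I.set / I.len ≤ t ^ (-((1:ℝ)/(N:ℝ))) - 1 := by linarith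
        calc Metric.infDist a I.set = Metric.infDist a I.set / I.len * I.len := by
              field_simp
          _ ≤ (t ^ (-((1:ℝ)/(N:ℝ))) - 1) * I.len := mul_le_mul_of_nonneg_right h2 hL.le
          _ = I.len * (t ^ (-((1:ℝ)/(N:ℝ))) - 1) := by ring
      have habs : |a - x₀| < r := by
        have h1 := dist_le_infDist_add hL a x₀
        have : -(1/(N:ℝ)) = -((1:ℝ)/(N:ℝ)) := by norm_num
        rw [hrdef, this]
        calc |a - x₀| ≤ Metric.infDist a I.set + I.len + Metric.infDist x₀ I.set := h1
          _ ≤ I.len * (t ^ (-((1:ℝ)/(N:ℝ))) - 1) + I.len + D := by linarith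
          _ < I.len * t ^ (-((1:ℝ)/(N:ℝ))) + (D + I.len) := by nlinarith
      rw [abs_lt] at habs
      constructor <;> linarith [habs.1, habs.2]
    calc h t = (μ {a | t ≤ I.chi a ^ N}).toReal := rfl
      _ = (volume ({a | t ≤ I.chi a ^ N} ∩ Ei)).toReal := by
          rw [hμ, Measure.restrict_apply]
          exact measurableSet_le measurable_const chi_meas
      _ ≤ (volume (Ei ∩ Set.Ioo (x₀ - r) (x₀ + r))).toReal := by
          apply ENNReal.toReal_mono
          · exact (lt_of_le_of_lt (measure_mono Set.inter_subset_left) hEfin).ne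
          · exact measure_mono hsubset
      _ ≤ C₀ * μi * (2*r) := hmax r hrpos
      _ = g t := by rw [hgdef, hrdef]; ring
  have hmono : ∫ t in Set.Ioc (0:ℝ) 1, h t ≤ ∫ t in Set.Ioc (0:ℝ) 1, g t :=
    setIntegral_mono_on hh_int hg_int measurableSet_Ioc hpt
  have hgval : ∫ t in Set.Ioc (0:ℝ) 1, g t ≤ 2 * C₀ * μi * (D + 3*I.len) := by
    have hhalf : (1:ℝ)/(N:ℝ) ≤ 1/2 := one_div_le_one_div_of_le two_pos hN2
    have hexp : (0:ℝ) < -(1/(N:ℝ)) + 1 := by linarith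
    have hrint : ∫ t in Set.Ioc (0:ℝ) 1, t ^ (-(1/(N:ℝ))) ≤ 2 := by
      rw [← intervalIntegral.integral_of_le zero_le_one]
      rw [integral_rpow (Or.inl (by rw [neg_lt, neg_neg, div_lt_iff₀ hNpos]; linarith))]
      rw [Real.one_rpow, Real.zero_rpow hexp.ne']
      rw [div_le_iff₀ hexp]
      linarith
    have hvol : (volume (Set.Ioc (0:ℝ) 1)).toReal = 1 := by simp
    calc ∫ t in Set.Ioc (0:ℝ) 1, g t
        = 2*C₀*μi * ((I.len * ∫ t in Set.Ioc (0:ℝ) 1, t ^ (-(1/(N:ℝ)))) + (D + I.len)) := by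
          rw [hgdef, integral_const_mul, integral_add (hrpow_int.const_mul I.len)
            (integrableOn_const (by simp)), integral_const_mul, setIntegral_const,
            smul_eq_mul, measureReal_def, hvol, one_mul]
      _ ≤ 2*C₀*μi * ((I.len * 2) + (D + I.len)) := by
          apply mul_le_mul_of_nonneg_left _ (by positivity)
          have := mul_le_mul_of_nonneg_left hrint hL.le
          linarith
      _ = 2 * C₀ * μi * (D + 3*I.len) := by ring
  calc ∫ x in Ei, I.chi x ^ N = ∫ x, I.chi x ^ N ∂μ := rfl
    _ = ∫ t in Set.Ioc (0:ℝ) 1, h t := hlc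
    _ ≤ ∫ t in Set.Ioc (0:ℝ) 1, g t := hmono
    _ ≤ 2 * C₀ * μi * (D + 3*I.len) := hgval

end Aux9

/-- the exceptional-set estimate (Section 4, estimate (decay)):
`λₙ(I) ≲ (1 + λ₁(I) + ⋯ + λ_{n-1}(I))^{1-N}`. -/
theorem statement9 (n : ℕ) (hn : 2 ≤ n) (N : ℕ) (hN : 2 ≤ N) (C₀ : ℝ) (hC₀ : 0 < C₀) :
    ∃ C : ℝ, ∀ E : Fin n → Set ℝ,
      (∀ i, MeasurableSet (E i)) → (∀ i, volume (E i) < ⊤) →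
      volume (E ⟨n - 1, by omega⟩) = 1 →
      ∀ E' : Fin n → Set ℝ,
        E' ⟨n - 1, by omega⟩ =
          {x ∈ E ⟨n - 1, by omega⟩ |
            ∀ i, maximalFn (E i) x < ENNReal.ofReal C₀ * volume (E i)} →
        (∀ i : Fin n, (i : ℕ) < n - 1 → E' i = E i) →
        2⁻¹ ≤ volume (E' ⟨n - 1, by omega⟩) →
        ∀ I : Iv, 0 < I.len →
          lamAvg N (E' ⟨n - 1, by omega⟩) I ≤
            C * (1 + ∑ i ∈ Finset.univ.filter (fun i : Fin n => (i : ℕ) < n - 1),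
                lamAvg N (E' i) I) ^ ((1 : ℝ) - N) := by
  set C₁ : ℝ := 1 + 8 * n * C₀ with hC₁def
  have hC₁pos : 0 < C₁ := by positivity
  have hC₁1 : 1 ≤ C₁ := by
    have h : (0:ℝ) ≤ 8 * n * C₀ := by positivity
    linarith
  refine ⟨6 * C₁ ^ ((N:ℝ) - 1), ?_⟩
  intro E hEmeas hEfin hvolE E' hE'n hE'i hSvol I hL
  set S := E' ⟨n - 1, by omega⟩ with hSdef
  -- S nonempty
  have hSne : S.Nonempty := by
    rcases Set.eq_empty_or_nonempty S with he | hne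
    · exfalso
      rw [he] at hSvol
      simp at hSvol
    · exact hne
  have hSsub : S ⊆ E ⟨n - 1, by omega⟩ := by
    rw [hE'n]; exact fun x hx => hx.1
  have hSfin : volume S ≤ 1 := by
    calc volume S ≤ volume (E ⟨n - 1, by omega⟩) := measure_mono hSsub
      _ = 1 := hvolE
  -- the distance d
  set dset := (fun x => Metric.infDist x I.set) '' S with hdset
  have hdsetne : dset.Nonempty := hSne.image _
  have hdsetbdd : BddBelow dset := ⟨0, by rintro y ⟨x, _, rfl⟩; exact Metric.infDist_nonneg⟩
  set d := sInf dset with hddef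
  have hd0 : 0 ≤ d := le_csInf hdsetne (by rintro y ⟨x, _, rfl⟩; exact Metric.infDist_nonneg)
  have hdlb : ∀ x ∈ S, d ≤ Metric.infDist x I.set := fun x hx =>
    csInf_le hdsetbdd ⟨x, hx, rfl⟩
  obtain ⟨y₀, ⟨x₀, hx₀S, rfl⟩, hy₀⟩ :=
    (csInf_lt_iff hdsetbdd hdsetne).1 (show sInf dset < d + I.len by rw [← hddef]; linarith)
  set D := d + I.len with hDdef
  have hDnn : 0 ≤ D := by rw [hDdef]; linarith
  have hDdist : Metric.infDist x₀ I.set ≤ D := hy₀.le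
  set u : ℝ := 1 + d / I.len with hudef
  have hu1 : 1 ≤ u := by
    have : 0 ≤ d / I.len := div_nonneg hd0 hL.le
    rw [hudef]; linarith
  have hupos : 0 < u := by linarith
  set p : ℝ := (1:ℝ) - N with hpdef
  have hp0 : p ≤ 0 := by
    have : (2:ℝ) ≤ (N:ℝ) := by exact_mod_cast hN
    rw [hpdef]; linarith
  have hup_pos : 0 < u ^ p := Real.rpow_pos_of_pos hupos p
  -- bound on lamAvg of S
  have hm : (1:ℝ)/2 ≤ (volume S).toReal := by
    have h1 : ((2:ℝ≥0∞)⁻¹).toReal ≤ (volume S).toReal :=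
      ENNReal.toReal_mono (lt_of_le_of_lt hSfin (by norm_num)).ne hSvol
    simpa using h1
  have hnum : ∫ x in S, I.chi x ^ N ≤ 3 * I.len * u ^ p :=
    numerator_bound hL hN S d hd0 hdlb
  have hnum0 : 0 ≤ ∫ x in S, I.chi x ^ N :=
    integral_nonneg fun x => pow_nonneg (chi_nonneg hL x) N
  have hlamS : lamAvg N S I ≤ 6 * u ^ p := by
    unfold lamAvg
    have hden : I.len * (1/2) ≤ I.len * (volume S).toReal :=
      mul_le_mul_of_nonneg_left hm hL.le
    have hdenpos : 0 < I.len * (1/2) := by linarith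
    calc (∫ x in S, I.chi x ^ N) / (I.len * (volume S).toReal)
        ≤ (3 * I.len * u ^ p) / (I.len * (1/2)) :=
          div_le_div₀ (by positivity) hnum hdenpos hden
      _ = 6 * u ^ p := by field_simp; ring
  -- bound on each lam_i
  have hlami : ∀ i : Fin n, (i : ℕ) < n - 1 → lamAvg N (E' i) I ≤ 8 * C₀ * u := by
    intro i hi
    rw [hE'i i hi]
    have hx₀prop : ∀ j, maximalFn (E j) x₀ < ENNReal.ofReal C₀ * volume (E j) := by
      have := hx₀S
      rw [hE'n] at this
      exact this.2
    rcases eq_or_ne (volume (E i)) 0 with hz | hz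
    · unfold lamAvg
      rw [Measure.restrict_eq_zero.mpr hz, integral_zero_measure, zero_div]
      positivity
    · have hμpos : 0 < (volume (E i)).toReal :=
        ENNReal.toReal_pos hz (hEfin i).ne
      have hmax : ∀ r : ℝ, 0 < r → (volume (E i ∩ Set.Ioo (x₀ - r) (x₀ + r))).toReal
          ≤ C₀ * (volume (E i)).toReal * (2*r) := by
        intro r hr
        have h1 : volume (E i ∩ Set.Ioo (x₀ - r) (x₀ + r)) / ENNReal.ofReal (2*r)
            ≤ maximalFn (E i) x₀ :=
          le_iSup_of_le r (le_iSup_of_le hr le_rfl)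
        have h2 := lt_of_le_of_lt h1 (hx₀prop i)
        have h3 : volume (E i ∩ Set.Ioo (x₀ - r) (x₀ + r))
            ≤ ENNReal.ofReal C₀ * volume (E i) * ENNReal.ofReal (2*r) := by
          rw [← ENNReal.div_le_iff_le_mul]
          · exact h2.le
          · left; simp [ENNReal.ofReal_eq_zero]; linarith
          · left; exact ENNReal.ofReal_ne_top
        have h4 := ENNReal.toReal_mono ?_ h3
        · rw [ENNReal.toReal_mul, ENNReal.toReal_mul, ENNReal.toReal_ofReal hC₀.le,
            ENNReal.toReal_ofReal (by linarith : (0:ℝ) ≤ 2*r)] at h4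
          exact h4
        · exact ENNReal.mul_ne_top (ENNReal.mul_ne_top ENNReal.ofReal_ne_top (hEfin i).ne)
            ENNReal.ofReal_ne_top
      have hnumi := lam_i_bound hL hN (E i) (hEfin i) hC₀ x₀ D hDnn hDdist hmax
      have hnumi0 : 0 ≤ ∫ x in (E i), I.chi x ^ N :=
        integral_nonneg fun x => pow_nonneg (chi_nonneg hL x) N
      unfold lamAvg
      have hdenpos : 0 < I.len * (volume (E i)).toReal := by positivity
      calc (∫ x in (E i), I.chi x ^ N) / (I.len * (volume (E i)).toReal)
          ≤ (2 * C₀ * (volume (E i)).toReal * (D + 3*I.len)) / (I.len * (volume (E i)).toReal) :=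
            div_le_div₀ (mul_nonneg (by positivity) (by rw [hDdef]; linarith)) hnumi hdenpos le_rfl
        _ ≤ 8 * C₀ * u := by
            rw [div_le_iff₀ hdenpos, hDdef]
            have hul : u * I.len = I.len + d := by rw [hudef]; field_simp
            nlinarith [hμpos.le, hC₀.le, hd0, hL.le, hul,
              mul_nonneg (mul_nonneg hC₀.le hμpos.le) hd0]
  -- sum bound
  set Ssum := ∑ i ∈ Finset.univ.filter (fun i : Fin n => (i : ℕ) < n - 1), lamAvg N (E' i) I
    with hSsumdef
  have hSsumnn : 0 ≤ Ssum := by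
    apply Finset.sum_nonneg
    intro i hi
    unfold lamAvg
    apply div_nonneg (integral_nonneg fun x => pow_nonneg (chi_nonneg hL x) N)
    positivity
  have hSsumle : Ssum ≤ n * (8 * C₀ * u) := by
    rw [hSsumdef]
    calc ∑ i ∈ Finset.univ.filter (fun i : Fin n => (i : ℕ) < n - 1), lamAvg N (E' i) I
        ≤ ∑ _i ∈ Finset.univ.filter (fun i : Fin n => (i : ℕ) < n - 1), 8 * C₀ * u := by
          apply Finset.sum_le_sum
          intro i hi
          exact hlami i (by simpa using (Finset.mem_filter.1 hi).2)
      _ = (Finset.univ.filter (fun i : Fin n => (i : ℕ) < n - 1)).card * (8 * C₀ * u) := by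
          rw [Finset.sum_const, nsmul_eq_mul]
      _ ≤ n * (8 * C₀ * u) := by
          apply mul_le_mul_of_nonneg_right _ (by positivity)
          have h1 : (Finset.univ.filter (fun i : Fin n => (i : ℕ) < n - 1)).card ≤ n := by
            calc _ ≤ Finset.univ.card := Finset.card_filter_le _ _
              _ = n := by simp
          exact_mod_cast h1
  have hkey : 1 + Ssum ≤ C₁ * u := by
    have : C₁ * u = u + 8 * n * C₀ * u := by rw [hC₁def]; ring
    rw [this]
    have h8 : (n:ℝ) * (8 * C₀ * u) = 8 * n * C₀ * u := by ring
    rw [h8] at hSsumle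
    linarith
  have hpos1 : (0:ℝ) < 1 + Ssum := by linarith
  have hrpow : (C₁ * u) ^ p ≤ (1 + Ssum) ^ p :=
    Real.rpow_le_rpow_of_nonpos hpos1 hkey hp0
  have hCid : 6 * u ^ p = (6 * C₁ ^ ((N:ℝ) - 1)) * (C₁ * u) ^ p := by
    rw [Real.mul_rpow hC₁pos.le hupos.le]
    have : C₁ ^ ((N:ℝ) - 1) * C₁ ^ p = 1 := by
      rw [← Real.rpow_add hC₁pos, hpdef]
      norm_num
    calc 6 * u ^ p = 6 * (C₁ ^ ((N:ℝ) - 1) * C₁ ^ p) * u ^ p := by rw [this]; ring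
      _ = 6 * C₁ ^ ((N:ℝ) - 1) * (C₁ ^ p * u ^ p) := by ring
  calc lamAvg N S I ≤ 6 * u ^ p := hlamS
    _ = (6 * C₁ ^ ((N:ℝ) - 1)) * (C₁ * u) ^ p := hCid
    _ ≤ (6 * C₁ ^ ((N:ℝ) - 1)) * (1 + Ssum) ^ p := by
        apply mul_le_mul_of_nonneg_left hrpow
        positivity
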